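/- Let C be a compact convex subset of ℝ² with positive area, let P be a point, and let A(θ) = area(C ∩ H(P,θ)) with H(P,θ) = {x : ⟨x − P, (−sin θ, cos θ)⟩ ≥ 0}. Suppose α < β with β − α < π, A(α) = 0 and A(β) = area(C). Then A is monotone nondecreasing on the interval [α, β]. -/

import Mathlib

open MeasureTheory
open scoped RealInnerProductSpace ENNReal

private lemma inner_val_aux (x Q : EuclideanSpace ℝ (Fin 2)) (θ : ℝ) :
    ⟪x - Q, (WithLp.toLp 2 ![-Real.sin θ, Real.cos θ] : EuclideanSpace ℝ (Fin 2))⟫ =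
      (x 0 - Q 0) * (-Real.sin θ) + (x 1 - Q 1) * Real.cos θ := by
  simp [PiLp.inner_apply, Fin.sum_univ_two]
  ring

/-- If the line through `P` sweeps across the compact convex region `C` exactly once
as the angle goes from `α` to `β` (with `β - α < π`), then the swept area is a
monotone nondecreasing function of the angle on `[α, β]`. -/
theorem monotoneOn_halfplane_area_of_sweep
    (C : Set (EuclideanSpace ℝ (Fin 2))) (hCcompact : IsCompact C) (hCconv : Convex ℝ C)
    (hCpos : 0 < volume C)
    (P : EuclideanSpace ℝ (Fin 2))
    (H : EuclideanSpace ℝ (Fin 2) → ℝ → Set (EuclideanSpace ℝ (Fin 2)))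
    (hH : ∀ Q θ, H Q θ =
      {x | 0 ≤ ⟪x - Q, (WithLp.toLp 2 ![-Real.sin θ, Real.cos θ] : EuclideanSpace ℝ (Fin 2))⟫})
    (A : ℝ → ℝ≥0∞) (hA : ∀ θ, A θ = volume (C ∩ H P θ))
    (α β : ℝ) (hαβ : α < β) (hπ : β - α < Real.pi)
    (hα : A α = 0) (hβ : A β = volume C) :
    MonotoneOn A (Set.Icc α β) := by
  intro θ₁ h1 θ₂ h2 h12
  obtain ⟨ha1, hb1⟩ := h1
  obtain ⟨ha2, hb2⟩ := h2
  have key : C ∩ H P θ₁ ⊆ (C ∩ H P θ₂) ∪ (C ∩ H P α) := by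
    rintro x ⟨hxC, hx1⟩
    rw [hH] at hx1
    rw [Set.mem_setOf_eq, inner_val_aux] at hx1
    set p : ℝ := x 0 - P 0 with hp
    set q : ℝ := x 1 - P 1 with hq
    by_cases hcase : 0 ≤ p * (-Real.sin θ₂) + q * Real.cos θ₂
    · left
      exact ⟨hxC, by rw [hH]; rw [Set.mem_setOf_eq, inner_val_aux]; exact hcase⟩
    · right
      refine ⟨hxC, ?_⟩
      rw [hH, Set.mem_setOf_eq, inner_val_aux]
      show (0:ℝ) ≤ p * -Real.sin α + q * Real.cos α
      push_neg at hcase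
      -- θ₁ ≠ θ₂, since f θ₁ ≥ 0 > f θ₂
      have hne : θ₁ < θ₂ := by
        rcases lt_or_eq_of_le h12 with h | h
        · exact h
        · exfalso; rw [h] at hx1; linarith
      have hs21 : 0 < Real.sin (θ₂ - θ₁) := by
        apply Real.sin_pos_of_pos_of_lt_pi
        · linarith
        · linarith
      have hs2a : 0 ≤ Real.sin (θ₂ - α) := by
        apply Real.sin_nonneg_of_nonneg_of_le_pi
        · linarith
        · linarith
      have hs1a : 0 ≤ Real.sin (θ₁ - α) := by
        apply Real.sin_nonneg_of_nonneg_of_le_pi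
        · linarith
        · linarith
      have hid : Real.sin (θ₂ - θ₁) * (p * (-Real.sin α) + q * Real.cos α) =
          Real.sin (θ₂ - α) * (p * (-Real.sin θ₁) + q * Real.cos θ₁)
          - Real.sin (θ₁ - α) * (p * (-Real.sin θ₂) + q * Real.cos θ₂) := by
        simp only [Real.sin_sub]
        ring
      nlinarith [mul_nonneg hs2a hx1, mul_nonneg hs1a (le_of_lt (neg_pos.mpr hcase))]
  have hαzero : volume (C ∩ H P α) = 0 := by rw [← hA]; exact hα
  rw [hA θ₁, hA θ₂]
  calc volume (C ∩ H P θ₁) ≤ volume ((C ∩ H P θ₂) ∪ (C ∩ H P α)) := measure_mono key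
    _ ≤ volume (C ∩ H P θ₂) + volume (C ∩ H P α) := measure_union_le _ _
    _ = volume (C ∩ H P θ₂) := by rw [hαzero, add_zero]
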